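/- Let K be a tight set of (possibly nonfinite) Borel measures on [0,∞). Then there exists a strictly increasing function ψ : [0,∞) → [0,∞) with ψ(0) = 0, ψ(s) → ∞ as s → ∞ and sup_{ν∈K} ∫₀^∞ ψ(s) dν(s) < ∞ if and only if sup_{ν∈K} ν((s,∞)) < ∞ for all s > 0. -/

import Mathlib

open MeasureTheory Filter Set Topology NNReal ENNReal


namespace Stmt2Aux

noncomputable def ramp (a b s : ℝ≥0) : ℝ≥0 := ((s - a) ⊓ (b - a)) / (b - a)

lemma ramp_mono (a b : ℝ≥0) : Monotone (ramp a b) := by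
  intro s s' h
  unfold ramp
  gcongr

lemma ramp_of_le {a b s : ℝ≥0} (h : s ≤ a) : ramp a b s = 0 := by
  unfold ramp
  rw [tsub_eq_zero_of_le h]
  simp

lemma ramp_le_one (a b s : ℝ≥0) : ramp a b s ≤ 1 := by
  unfold ramp
  rcases le_or_gt b a with h | h
  · rw [tsub_eq_zero_of_le h]
    simp
  · rw [div_le_one (tsub_pos_of_lt h)]
    exact inf_le_right

lemma ramp_of_ge {a b s : ℝ≥0} (hab : a < b) (h : b ≤ s) : ramp a b s = 1 := by
  unfold ramp
  rw [inf_eq_right.2 (by gcongr), div_self]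
  exact (tsub_pos_of_lt hab).ne'

lemma ramp_lt {a b s s' : ℝ≥0} (hab : a < b) (h1 : a < s') (h2 : s' ≤ b) (h3 : s < s') :
    ramp a b s < ramp a b s' := by
  unfold ramp
  have hba : (0:ℝ≥0) < b - a := tsub_pos_of_lt hab
  rw [div_lt_div_iff_of_pos_right hba]
  have hB : s' - a ≤ b - a := by gcongr
  rw [inf_eq_left.2 hB]
  rcases le_or_gt s a with hs | hs
  · rw [tsub_eq_zero_of_le hs]
    simpa using tsub_pos_of_lt h1
  · exact lt_of_le_of_lt inf_le_left (tsub_lt_tsub_right_of_le hs.le h3)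

lemma ramp_measurable (a b : ℝ≥0) : Measurable (ramp a b) :=
  (ramp_mono a b).measurable

lemma lintegral_ramp_le (ν : Measure ℝ≥0) (C a b : ℝ≥0) :
    ∫⁻ x, ((C * ramp a b x : ℝ≥0) : ℝ≥0∞) ∂ν ≤ (C : ℝ≥0∞) * ν (Ioi a) := by
  have hle : ∀ x, ((C * ramp a b x : ℝ≥0) : ℝ≥0∞)
      ≤ (Ioi a).indicator (fun _ => (C : ℝ≥0∞)) x := by
    intro x
    rcases le_or_gt x a with hx | hx
    · rw [ramp_of_le hx]
      simp
    · rw [Set.indicator_of_mem (Set.mem_Ioi.mpr hx)]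
      exact_mod_cast mul_le_of_le_one_right zero_le (ramp_le_one a b x)
  calc ∫⁻ x, ((C * ramp a b x : ℝ≥0) : ℝ≥0∞) ∂ν
      ≤ ∫⁻ x, (Ioi a).indicator (fun _ => (C : ℝ≥0∞)) x ∂ν := lintegral_mono hle
    _ = (C : ℝ≥0∞) * ν (Ioi a) := lintegral_indicator_const measurableSet_Ioi _

end Stmt2Aux

open Stmt2Aux in
/-- **Statement 2.** Let `K` be a tight set of (possibly nonfinite) Borel measures on `[0,∞)`.
Then there exists a strictly increasing `ψ : [0,∞) → [0,∞)` with `ψ(0)=0`, `ψ(s) → ∞` and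
`sup_{ν∈K} ∫ ψ dν < ∞` if and only if `sup_{ν∈K} ν((s,∞)) < ∞` for all `s > 0`. -/
theorem stmt_2 (K : Set (Measure ℝ≥0))
    (htight : Tendsto (fun s : ℝ≥0 => ⨆ ν ∈ K, ν (Ioi s)) atTop (𝓝 0)) :
    (∃ ψ : ℝ≥0 → ℝ≥0, StrictMono ψ ∧ ψ 0 = 0 ∧ Tendsto ψ atTop atTop ∧
        (⨆ ν ∈ K, ∫⁻ s, (ψ s : ℝ≥0∞) ∂ν) < ⊤) ↔
      (∀ s : ℝ≥0, 0 < s → (⨆ ν ∈ K, ν (Ioi s)) < ⊤) := by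
  classical
  constructor
  · rintro ⟨ψ, hmono, hzero, -, hsup⟩ s hs
    have hψs : (0:ℝ≥0) < ψ s := hzero ▸ hmono hs
    have hψs' : ((ψ s : ℝ≥0∞)) ≠ 0 := by exact_mod_cast hψs.ne'
    have key : ∀ ν ∈ K, ν (Ioi s) ≤ (⨆ ν ∈ K, ∫⁻ u, (ψ u : ℝ≥0∞) ∂ν) / (ψ s : ℝ≥0∞) := by
      intro ν hν
      rw [ENNReal.le_div_iff_mul_le (Or.inl hψs') (Or.inl ENNReal.coe_ne_top)]
      calc ν (Ioi s) * (ψ s : ℝ≥0∞)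
          = ∫⁻ u, (Ioi s).indicator (fun _ => (ψ s : ℝ≥0∞)) u ∂ν := by
            rw [lintegral_indicator_const measurableSet_Ioi, mul_comm]
        _ ≤ ∫⁻ u, (ψ u : ℝ≥0∞) ∂ν := by
            refine lintegral_mono fun u => ?_
            rcases le_or_gt u s with hu | hu
            · rw [Set.indicator_of_notMem (by simpa using hu.not_gt)]
              exact zero_le
            · rw [Set.indicator_of_mem (Set.mem_Ioi.mpr hu)]
              exact ENNReal.coe_le_coe.2 (hmono.monotone hu.le)
        _ ≤ ⨆ ν ∈ K, ∫⁻ u, (ψ u : ℝ≥0∞) ∂ν := le_biSup (fun ν => ∫⁻ u, (ψ u : ℝ≥0∞) ∂ν) hν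
    exact lt_of_le_of_lt (iSup₂_le key) (ENNReal.div_lt_top hsup.ne hψs')
  · intro hfin
    set F : ℝ≥0 → ℝ≥0∞ := fun s => ⨆ ν ∈ K, ν (Ioi s) with hFdef
    have hT : ∀ n : ℕ, ∃ T : ℝ≥0, ∀ s, T ≤ s → F s ≤ (2⁻¹ : ℝ≥0∞) ^ n := by
      intro n
      have h2 : (0:ℝ≥0∞) < (2⁻¹ : ℝ≥0∞) ^ n := ENNReal.pow_pos (by norm_num) n
      have := (ENNReal.tendsto_nhds_zero.mp htight _ h2)
      obtain ⟨T, hT⟩ := eventually_atTop.mp this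
      exact ⟨T, hT⟩
    choose T hT using hT
    set t : ℕ → ℝ≥0 := fun n => (Finset.range (n+1)).sup T + ((n:ℝ≥0)+1) with htdef
    have ht_lt : ∀ n, t n < t (n+1) := by
      intro n
      refine add_lt_add_of_le_of_lt (Finset.sup_mono ?_) (by push_cast; exact lt_add_one _)
      exact Finset.range_subset_range.2 (by omega)
    have htmono : StrictMono t := strictMono_nat_of_lt_succ ht_lt
    have htn : ∀ n : ℕ, ((n:ℝ≥0)+1) ≤ t n := fun n => le_add_self
    have htF : ∀ n, F (t n) ≤ (2⁻¹ : ℝ≥0∞) ^ n := by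
      intro n
      refine hT n _ (le_trans (Finset.le_sup (Finset.mem_range.2 (Nat.lt_succ_self n))) le_self_add)
    have ht0pos : (0:ℝ≥0) < t 0 := lt_of_lt_of_le one_pos (by simpa using htn 0)
    set r : ℕ → ℝ≥0 := fun m => t 0 / ((m:ℝ≥0)+1) with hrdef
    have hr0 : r 0 = t 0 := by simp [hrdef]
    have hrpos : ∀ m, 0 < r m := fun m => div_pos ht0pos (by positivity)
    have hrlt : ∀ m, r (m+1) < r m := by
      intro m
      refine (div_lt_div_iff_of_pos_left ht0pos (by positivity) (by positivity)).2 ?_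
      push_cast
      exact lt_add_one _
    set b : ℕ → ℝ≥0 := fun m => (F (r (m+1))).toNNReal with hbdef
    have hb : ∀ m, F (r (m+1)) = (b m : ℝ≥0∞) :=
      fun m => (ENNReal.coe_toNNReal (hfin _ (hrpos _)).ne).symm
    set c : ℕ → ℝ≥0 := fun m => (2⁻¹:ℝ≥0)^m / (1 + b m) with hcdef
    have hc_pos : ∀ m, 0 < c m := fun m => div_pos (by positivity) (by positivity)
    have hc_le : ∀ m, c m ≤ (2⁻¹:ℝ≥0)^m := fun m => div_le_self zero_le (le_add_right le_rfl)
    have hcb : ∀ m, (c m : ℝ≥0∞) * F (r (m+1)) ≤ (((2⁻¹:ℝ≥0)^m : ℝ≥0) : ℝ≥0∞) := by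
      intro m
      rw [hb, ← ENNReal.coe_mul, ENNReal.coe_le_coe]
      calc c m * b m = (2⁻¹:ℝ≥0)^m * (b m / (1 + b m)) := by
            rw [div_mul_eq_mul_div, mul_div_assoc]
        _ ≤ (2⁻¹:ℝ≥0)^m * 1 := by
            gcongr
            exact (div_le_one (by positivity)).2 le_add_self
        _ = (2⁻¹:ℝ≥0)^m := mul_one _
    set g : ℕ → ℝ≥0 → ℝ≥0 := fun m s => c m * ramp (r (m+1)) (r m) s with hgdef
    set h : ℕ → ℝ≥0 → ℝ≥0 := fun n s => ramp (t n) (t (n+1)) s with hhdef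
    have hgm : ∀ m, Monotone (g m) := fun m x y hxy =>
      mul_le_mul_right (ramp_mono _ _ hxy) _
    have hhm : ∀ n, Monotone (h n) := fun n => ramp_mono _ _
    have hcsum : Summable c :=
      NNReal.summable_of_le hc_le (NNReal.summable_geometric (by rw [← NNReal.coe_lt_coe]; norm_num))
    have hgsum : ∀ s, Summable (fun m => g m s) := fun s =>
      NNReal.summable_of_le
        (fun m => mul_le_of_le_one_right zero_le (ramp_le_one _ _ _)) hcsum
    have hhzero : ∀ s : ℝ≥0, ∀ n, ⌈s⌉₊ ≤ n → h n s = 0 := by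
      intro s n hn
      refine ramp_of_le (le_trans (Nat.le_ceil s) ?_)
      calc ((⌈s⌉₊ : ℝ≥0)) ≤ (n:ℝ≥0) := by exact_mod_cast hn
        _ ≤ (n:ℝ≥0) + 1 := le_add_right le_rfl
        _ ≤ t n := htn n
    have hhsum : ∀ s, Summable (fun n => h n s) := by
      intro s
      refine summable_of_ne_finset_zero (s := Finset.range ⌈s⌉₊) fun n hn => ?_
      exact hhzero s n (le_of_not_gt (fun hlt => hn (Finset.mem_range.2 hlt)))
    have hgeo : Summable (fun m : ℕ => (2⁻¹:ℝ≥0)^m) :=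
      NNReal.summable_geometric (by rw [← NNReal.coe_lt_coe]; norm_num)
    refine ⟨fun s => (∑' m, g m s) + (∑' n, h n s), ?_, ?_, ?_, ?_⟩
    · -- StrictMono
      intro s s' hss
      have hGle : ∀ m, g m s ≤ g m s' := fun m => hgm m hss.le
      have hHle : ∀ n, h n s ≤ h n s' := fun n => hhm n hss.le
      rcases le_or_gt s' (t 0) with hcase | hcase
      · have hs' : 0 < s' := lt_of_le_of_lt zero_le hss
        have hex : ∃ m, r (m+1) < s' := by
          obtain ⟨M, hM⟩ := exists_nat_gt (t 0 / s')
          refine ⟨M, ?_⟩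
          have h1 : t 0 < s' * ((M:ℝ≥0) + 1 + 1) := by
            calc t 0 < (M:ℝ≥0) * s' := (div_lt_iff₀ hs').1 hM
              _ ≤ ((M:ℝ≥0) + 1 + 1) * s' := by
                  gcongr
                  exact le_add_right (le_add_right le_rfl)
              _ = s' * ((M:ℝ≥0) + 1 + 1) := mul_comm _ _
          show t 0 / ((↑(M+1):ℝ≥0) + 1) < s'
          rw [div_lt_iff₀ (by positivity)]
          push_cast
          push_cast at h1
          convert h1 using 2
        set m₀ := Nat.find hex with hm0
        have hm1 : r (m₀+1) < s' := Nat.find_spec hex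
        have hm2 : s' ≤ r m₀ := by
          rcases Nat.eq_zero_or_pos m₀ with h0 | h0
          · rw [h0, hr0]; exact hcase
          · obtain ⟨k, hk⟩ := Nat.exists_eq_succ_of_ne_zero h0.ne'
            rw [hk]
            exact le_of_not_gt (Nat.find_min hex (by omega))
        have hglt : g m₀ s < g m₀ s' :=
          mul_lt_mul_of_pos_left (ramp_lt (hrlt m₀) hm1 hm2 hss) (hc_pos m₀)
        exact add_lt_add_of_lt_of_le (NNReal.tsum_lt_tsum hGle hglt (hgsum s'))
          (Summable.tsum_le_tsum hHle (hhsum s) (hhsum s'))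
      · have hex : ∃ n, s' ≤ t (n+1) := by
          refine ⟨⌈s'⌉₊, ?_⟩
          calc s' ≤ (⌈s'⌉₊:ℝ≥0) := Nat.le_ceil s'
            _ ≤ (↑(⌈s'⌉₊+1):ℝ≥0) + 1 := by push_cast; exact le_add_right (le_add_right le_rfl)
            _ ≤ t (⌈s'⌉₊+1) := htn _
        set n₀ := Nat.find hex with hn0
        have hn1 : s' ≤ t (n₀+1) := Nat.find_spec hex
        have hn2 : t n₀ < s' := by
          rcases Nat.eq_zero_or_pos n₀ with h0 | h0
          · rw [h0]; exact hcase
          · obtain ⟨k, hk⟩ := Nat.exists_eq_succ_of_ne_zero h0.ne'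
            rw [hk]
            exact lt_of_not_ge (Nat.find_min hex (by omega))
        have hhlt : h n₀ s < h n₀ s' := ramp_lt (ht_lt n₀) hn2 hn1 hss
        exact add_lt_add_of_le_of_lt (Summable.tsum_le_tsum hGle (hgsum s) (hgsum s'))
          (NNReal.tsum_lt_tsum hHle hhlt (hhsum s'))
    · -- ψ 0 = 0
      have hg0 : ∀ m, g m 0 = 0 := fun m => by
        simp only [hgdef, ramp_of_le zero_le, mul_zero]
      have hh0 : ∀ n, h n 0 = 0 := fun n => ramp_of_le zero_le
      simp [hg0, hh0]
    · -- Tendsto atTop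
      rw [tendsto_atTop]
      intro bd
      filter_upwards [eventually_ge_atTop (t ⌈bd⌉₊)] with s hs
      have hone : ∀ k < ⌈bd⌉₊, h k s = 1 := by
        intro k hk
        exact ramp_of_ge (ht_lt k) (le_trans (htmono.monotone (by omega : k+1 ≤ ⌈bd⌉₊)) hs)
      calc bd ≤ (⌈bd⌉₊ : ℝ≥0) := Nat.le_ceil bd
        _ = ∑ k ∈ Finset.range ⌈bd⌉₊, h k s := by
            rw [Finset.sum_congr rfl (fun k hk => hone k (Finset.mem_range.1 hk))]
            simp
        _ ≤ ∑' n, h n s := Summable.sum_le_tsum _ (fun _ _ => zero_le) (hhsum s)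
        _ ≤ (∑' m, g m s) + (∑' n, h n s) := le_add_self
    · -- integral bound
      have h2 : (((2⁻¹:ℝ≥0)) : ℝ≥0∞) = 2⁻¹ := by
        rw [ENNReal.coe_inv two_ne_zero]
        norm_num
      have hbound : ∀ ν ∈ K, ∫⁻ s, (((∑' m, g m s) + (∑' n, h n s) : ℝ≥0) : ℝ≥0∞) ∂ν
          ≤ (↑(∑' m : ℕ, (2⁻¹:ℝ≥0)^m) + ↑(∑' m : ℕ, (2⁻¹:ℝ≥0)^m) : ℝ≥0∞) := by
        intro ν hν
        have hcoe : ∀ s : ℝ≥0, (((∑' m, g m s) + (∑' n, h n s) : ℝ≥0) : ℝ≥0∞)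
            = (∑' m, (g m s : ℝ≥0∞)) + (∑' n, (h n s : ℝ≥0∞)) := by
          intro s
          rw [ENNReal.coe_add, ENNReal.coe_tsum (hgsum s), ENNReal.coe_tsum (hhsum s)]
        simp only [hcoe]
        rw [lintegral_add_left (Measurable.ennreal_tsum
          (fun m => ((hgm m).measurable).coe_nnreal_ennreal))]
        rw [lintegral_tsum (fun m => (((hgm m).measurable).coe_nnreal_ennreal).aemeasurable)]
        rw [lintegral_tsum (fun n => (((hhm n).measurable).coe_nnreal_ennreal).aemeasurable)]
        refine add_le_add ?_ ?_
        · refine le_trans (ENNReal.tsum_le_tsum (fun m => ?_)) (ENNReal.coe_tsum hgeo).symm.le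
          calc ∫⁻ s, ((g m s : ℝ≥0) : ℝ≥0∞) ∂ν ≤ (c m : ℝ≥0∞) * ν (Ioi (r (m+1))) :=
                lintegral_ramp_le ν (c m) (r (m+1)) (r m)
            _ ≤ (c m : ℝ≥0∞) * F (r (m+1)) :=
                mul_le_mul_right (le_biSup (fun ν => ν (Ioi (r (m+1)))) hν) _
            _ ≤ _ := hcb m
        · refine le_trans (ENNReal.tsum_le_tsum (fun n => ?_)) (ENNReal.coe_tsum hgeo).symm.le
          have hrw : ∀ s : ℝ≥0, h n s = (1:ℝ≥0) * ramp (t n) (t (n+1)) s :=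
            fun s => (one_mul _).symm
          calc ∫⁻ s, ((h n s : ℝ≥0) : ℝ≥0∞) ∂ν
              ≤ ((1:ℝ≥0) : ℝ≥0∞) * ν (Ioi (t n)) := by
                simp only [hrw]
                exact lintegral_ramp_le ν 1 (t n) (t (n+1))
            _ ≤ F (t n) := by
                rw [ENNReal.coe_one, one_mul]
                exact le_biSup (fun ν => ν (Ioi (t n))) hν
            _ ≤ (2⁻¹ : ℝ≥0∞) ^ n := htF n
            _ = (((2⁻¹:ℝ≥0)^n : ℝ≥0) : ℝ≥0∞) := by rw [ENNReal.coe_pow, h2]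
      exact lt_of_le_of_lt (iSup₂_le hbound)
        (ENNReal.add_lt_top.2 ⟨ENNReal.coe_lt_top, ENNReal.coe_lt_top⟩)
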